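/- For every integer k ≥ 1, the subgraph C_k of complete lines of the Sierpiński graph Γ_k satisfies cut^{1/2}(C_k) ≥ 2^{k−1}; that is, for every set T of vertices of C_k with |T| < 2^{k−1}, the graph C_k − T has a connected component with more than |C_k|/2 vertices. -/

import Mathlib

open scoped Classical

/-- Reachability within the subgraph of `X` induced on a vertex set `s`. -/
def SimpleGraph.ReachIn {V : Type*} (X : SimpleGraph V) (s : Set V) (v w : V) : Prop :=
  ∃ (hv : v ∈ s) (hw : w ∈ s), (X.induce s).Reachable ⟨v, hv⟩ ⟨w, hw⟩

/-- The vertex set of the connected component of `v` in the subgraph of `X` induced on `s`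
(empty if `v ∉ s`). -/
def SimpleGraph.compIn {V : Type*} (X : SimpleGraph V) (s : Set V) (v : V) : Set V :=
  {w | X.ReachIn s v w}

/-- `T` is a vertex set witnessing `cut¹ᐟ²` for the subgraph of `X` induced on the finite
vertex set `G`: after removing `T` from `G`, every connected component has at most
`|G|/2` vertices. -/
def IsHalfCutSet {V : Type*} (X : SimpleGraph V) (G T : Finset V) : Prop :=
  T ⊆ G ∧ ∀ v : V, 2 * (X.compIn (↑(G \ T)) v).ncard ≤ G.card

/-- `cut¹ᐟ²` of the subgraph of `X` induced on the finite vertex set `G`: the least size of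
a vertex set whose removal leaves all connected components of size at most `|G|/2`. -/
noncomputable def cutHalf {V : Type*} (X : SimpleGraph V) (G : Finset V) : ℕ :=
  sInf {t | ∃ T : Finset V, IsHalfCutSet X G T ∧ T.card = t}

/-- The `1/2`-separation profile of `X`, over finite subgraphs with vertex set inside `W`. -/
noncomputable def sepHalf {V : Type*} (X : SimpleGraph V) (W : Set V) (n : ℕ) : ℕ :=
  sSup {c | ∃ G : Finset V, ↑G ⊆ W ∧ G.card ≤ n ∧ c = cutHalf X G}

/-- The `i`-th digit of `x` in base `b`. -/
def digit (b i x : ℕ) : ℕ := x / b ^ i % b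

/-- Membership in the vertex set of the infinite Sierpinski graph: no position at which
both coordinates have base-3 digit `1`. -/
def SierpMem (p : ℕ × ℕ) : Prop :=
  ∀ i : ℕ, ¬(digit 3 i p.1 = 1 ∧ digit 3 i p.2 = 1)

/-- The infinite Sierpinski graph `S`, with edges between valid points at `ℓ¹`-distance 1. -/
def SierpGraph : SimpleGraph (ℕ × ℕ) where
  Adj p q := SierpMem p ∧ SierpMem q ∧ |(p.1 : ℤ) - q.1| + |(p.2 : ℤ) - q.2| = 1
  symm := ⟨by
    rintro p q ⟨hp, hq, h⟩
    exact ⟨hq, hp, by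
      rw [abs_sub_comm (q.1 : ℤ) (p.1 : ℤ), abs_sub_comm (q.2 : ℤ) (p.2 : ℤ)]; exact h⟩⟩
  loopless := ⟨by rintro p ⟨-, -, h⟩; simp at h⟩

/-- The vertex set of the sphere `Γ_k`. -/
noncomputable def GammaV (k : ℕ) : Finset (ℕ × ℕ) :=
  (Finset.range (3 ^ k) ×ˢ Finset.range (3 ^ k)).filter SierpMem

/-- The intersection of the vertical line `V_x` with `Γ_k`. -/
def VlineSet (k x : ℕ) : Set (ℕ × ℕ) := {p | p ∈ GammaV k ∧ p.1 = x}

/-- The intersection of the horizontal line `H_y` with `Γ_k`. -/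
def HlineSet (k y : ℕ) : Set (ℕ × ℕ) := {p | p ∈ GammaV k ∧ p.2 = y}

/-- The vertical line `V_x` is complete in `Γ_k`: its intersection with `Γ_k` is connected. -/
def CompleteV (k x : ℕ) : Prop := (SierpGraph.induce (VlineSet k x)).Connected

/-- The horizontal line `H_y` is complete in `Γ_k`: its intersection with `Γ_k` is connected. -/
def CompleteH (k y : ℕ) : Prop := (SierpGraph.induce (HlineSet k y)).Connected

/-- The vertex set of the complete-lines subgraph `C_k` of `Γ_k`. -/
noncomputable def CkV (k : ℕ) : Finset (ℕ × ℕ) :=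
  (GammaV k).filter fun p => CompleteV k p.1 ∨ CompleteH k p.2

lemma digit_eq_zero {i x : ℕ} (h : x < 3 ^ i) : digit 3 i x = 0 := by
  simp [digit, Nat.div_eq_of_lt h]

lemma digit_low {i k : ℕ} (hik : i < k) (a c : ℕ) :
    digit 3 i (a + c * 3 ^ k) = digit 3 i a := by
  have h1 : c * 3 ^ k = c * 3 ^ (k - i - 1) * 3 * 3 ^ i := by
    rw [mul_assoc, mul_assoc, ← pow_succ', ← pow_add]
    congr 2
    omega
  unfold digit
  rw [h1, Nat.add_mul_div_right _ _ (by positivity), Nat.add_mul_mod_self_right]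

lemma digit_high {k : ℕ} (a c : ℕ) (ha : a < 3 ^ k) (hc : c < 3) :
    digit 3 k (a + c * 3 ^ k) = c := by
  unfold digit
  rw [Nat.add_mul_div_right _ _ (by positivity), Nat.div_eq_of_lt ha, Nat.zero_add,
    Nat.mod_eq_of_lt hc]

lemma digit_pow (i : ℕ) : digit 3 i (3 ^ i) = 1 := by
  have := digit_high (k := i) 0 1 (by positivity) (by norm_num)
  simpa using this

lemma digit_two_pow_self (i : ℕ) : digit 3 i (2 * 3 ^ i) = 2 := by
  have := digit_high (k := i) 0 2 (by positivity) (by norm_num)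
  simpa [mul_comm] using this

lemma digit_two_pow_ne (i j : ℕ) (h : j ≠ i) : digit 3 j (2 * 3 ^ i) ≠ 1 := by
  rcases lt_or_gt_of_ne h with hj | hj'
  · have := digit_low hj 0 2 (k := i)
    simp only [Nat.zero_add] at this
    rw [this]
    simp [digit]
  · have hj : i + 1 ≤ j := hj'
    have : 2 * 3 ^ i < 3 ^ j := by
      calc 2 * 3 ^ i < 3 * 3 ^ i := by have h3 : 0 < 3^i := pow_pos (by norm_num : (0:ℕ) < 3) i; omega
      _ = 3 ^ (i+1) := (pow_succ' 3 i).symm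
      _ ≤ 3 ^ j := Nat.pow_le_pow_right (by norm_num) hj
    rw [digit_eq_zero this]
    norm_num

/-- Numbers below `3^k` with no base-3 digit equal to 1. -/
noncomputable def Dset (k : ℕ) : Finset ℕ :=
  (Finset.range (3 ^ k)).filter (fun x => ∀ i, digit 3 i x ≠ 1)

lemma mem_Dset {k x : ℕ} : x ∈ Dset k ↔ x < 3 ^ k ∧ ∀ i, digit 3 i x ≠ 1 := by
  simp [Dset]

lemma Dset_succ (k : ℕ) : Dset (k + 1) = Dset k ∪ (Dset k).image (· + 2 * 3 ^ k) := by
  ext x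
  simp only [mem_Dset, Finset.mem_union, Finset.mem_image]
  constructor
  · rintro ⟨hx, hd⟩
    have hc3 : x / 3 ^ k < 3 := by
      have : x < 3 * 3 ^ k := by rw [← pow_succ']; exact hx
      exact Nat.div_lt_of_lt_mul (by omega)
    have hdk : digit 3 k x = x / 3 ^ k := Nat.mod_eq_of_lt hc3
    have hck : x / 3 ^ k ≠ 1 := hdk ▸ hd k
    have ha : x % 3 ^ k < 3 ^ k := Nat.mod_lt _ (pow_pos (by norm_num : (0:ℕ) < 3) k)
    have hx_eq : x = x % 3 ^ k + (x / 3 ^ k) * 3 ^ k := by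
      rw [Nat.mul_comm, Nat.mod_add_div]
    have hdig : ∀ i, digit 3 i (x % 3 ^ k) ≠ 1 := by
      intro i
      rcases lt_or_ge i k with hik | hik
      · have := digit_low hik (x % 3 ^ k) (x / 3 ^ k)
        rw [← hx_eq] at this
        rw [← this]
        exact hd i
      · rw [digit_eq_zero (lt_of_lt_of_le ha (Nat.pow_le_pow_right (by norm_num) hik))]
        norm_num
    interval_cases h : (x / 3 ^ k)
    · left
      constructor
      · omega
      · intro i
        have : x = x % 3 ^ k := by omega
        rw [this]; exact hdig i
    · omega
    · right
      refine ⟨x % 3 ^ k, ⟨ha, hdig⟩, ?_⟩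
      omega
  · rintro (⟨hx, hd⟩ | ⟨a, ⟨ha, hd⟩, rfl⟩)
    · refine ⟨lt_of_lt_of_le hx (Nat.pow_le_pow_right (by norm_num) (by omega)), hd⟩
    · constructor
      · have : 3 ^ (k+1) = 3 * 3 ^ k := by rw [pow_succ']
        omega
      · intro i
        rcases lt_trichotomy i k with hik | rfl | hik
        · rw [digit_low hik]; exact hd i
        · rw [digit_high a 2 ha (by norm_num)]; norm_num
        · have : a + 2 * 3 ^ k < 3 ^ i := by
            have h1 : a + 2 * 3 ^ k < 3 ^ (k+1) := by
              have : 3 ^ (k+1) = 3 * 3 ^ k := by rw [pow_succ']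
              omega
            exact lt_of_lt_of_le h1 (Nat.pow_le_pow_right (by norm_num) (by omega))
          rw [digit_eq_zero this]; norm_num

lemma card_Dset (k : ℕ) : (Dset k).card = 2 ^ k := by
  induction k with
  | zero =>
    have : Dset 0 = {0} := by
      ext x
      simp only [mem_Dset, Finset.mem_singleton, pow_zero, Nat.lt_one_iff]
      constructor
      · rintro ⟨h, -⟩; exact h
      · rintro rfl
        refine ⟨rfl, fun i => ?_⟩
        rw [digit_eq_zero (pow_pos (by norm_num : (0:ℕ) < 3) i)]
        norm_num
    rw [this]; rfl
  | succ k ih =>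
    rw [Dset_succ]
    have hdisj : Disjoint (Dset k) ((Dset k).image (· + 2 * 3 ^ k)) := by
      rw [Finset.disjoint_left]
      intro x hx hx'
      obtain ⟨a, ha, rfl⟩ := Finset.mem_image.mp hx'
      have h1 := (mem_Dset.mp hx).1
      have h2 : 0 < 3 ^ k := pow_pos (by norm_num : (0:ℕ) < 3) k
      omega
    rw [Finset.card_union_of_disjoint hdisj,
      Finset.card_image_of_injective _ (add_left_injective _), ih]
    ring

lemma sierpMem_left {x : ℕ} (hx : ∀ i, digit 3 i x ≠ 1) (y : ℕ) : SierpMem (x, y) := by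
  intro i ⟨h1, _⟩; exact hx i h1

lemma sierpMem_right {y : ℕ} (hy : ∀ i, digit 3 i y ≠ 1) (x : ℕ) : SierpMem (x, y) := by
  intro i ⟨_, h2⟩; exact hy i h2

lemma mem_GammaV {k : ℕ} {p : ℕ × ℕ} :
    p ∈ GammaV k ↔ p.1 < 3 ^ k ∧ p.2 < 3 ^ k ∧ SierpMem p := by
  simp [GammaV, Finset.mem_filter, Finset.mem_product, and_assoc]

lemma adj_vert {x y : ℕ} (h1 : SierpMem (x, y)) (h2 : SierpMem (x, y + 1)) :
    SierpGraph.Adj (x, y) (x, y + 1) := by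
  refine ⟨h1, h2, ?_⟩
  push_cast
  simp

lemma adj_horiz {x y : ℕ} (h1 : SierpMem (x, y)) (h2 : SierpMem (x + 1, y)) :
    SierpGraph.Adj (x, y) (x + 1, y) := by
  refine ⟨h1, h2, ?_⟩
  push_cast
  simp

lemma completeV_of_mem {k x : ℕ} (hx : x ∈ Dset k) : CompleteV k x := by
  unfold CompleteV
  obtain ⟨hxlt, hxd⟩ := mem_Dset.mp hx
  have hmem : ∀ y, y < 3 ^ k → (x, y) ∈ VlineSet k x := fun y hy =>
    ⟨mem_GammaV.mpr ⟨hxlt, hy, sierpMem_left hxd y⟩, rfl⟩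
  have h0 : (0:ℕ) < 3 ^ k := pow_pos (by norm_num : (0:ℕ) < 3) k
  have key : ∀ y (hy : y < 3 ^ k),
      (SierpGraph.induce (VlineSet k x)).Reachable ⟨(x, y), hmem y hy⟩ ⟨(x, 0), hmem 0 h0⟩ := by
    intro y
    induction y with
    | zero => intro _; exact SimpleGraph.Reachable.refl _
    | succ n ih =>
      intro hy
      have hn : n < 3 ^ k := by omega
      have hadj : (SierpGraph.induce (VlineSet k x)).Adj ⟨(x, n+1), hmem _ hy⟩ ⟨(x, n), hmem n hn⟩ := by
        simpa using (adj_vert (sierpMem_left hxd n) (sierpMem_left hxd (n+1))).symm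
      exact (hadj.reachable).trans (ih hn)
  haveI : Nonempty (VlineSet k x) := ⟨⟨(x, 0), hmem 0 h0⟩⟩
  constructor
  intro u v
  · have hu : u.1 = (x, u.1.2) := Prod.ext u.2.2 rfl
    have hv : v.1 = (x, v.1.2) := Prod.ext v.2.2 rfl
    have hu2 : u.1.2 < 3 ^ k := (mem_GammaV.mp u.2.1).2.1
    have hv2 : v.1.2 < 3 ^ k := (mem_GammaV.mp v.2.1).2.1
    have hueq : u = ⟨(x, u.1.2), hmem _ hu2⟩ := Subtype.ext hu
    have hveq : v = ⟨(x, v.1.2), hmem _ hv2⟩ := Subtype.ext hv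
    rw [hueq, hveq]
    exact (key _ hu2).trans (key _ hv2).symm

lemma completeH_of_mem {k y : ℕ} (hy : y ∈ Dset k) : CompleteH k y := by
  unfold CompleteH
  obtain ⟨hylt, hyd⟩ := mem_Dset.mp hy
  have hmem : ∀ x, x < 3 ^ k → (x, y) ∈ HlineSet k y := fun x hx =>
    ⟨mem_GammaV.mpr ⟨hx, hylt, sierpMem_right hyd x⟩, rfl⟩
  have h0 : (0:ℕ) < 3 ^ k := pow_pos (by norm_num : (0:ℕ) < 3) k
  have key : ∀ x (hx : x < 3 ^ k),
      (SierpGraph.induce (HlineSet k y)).Reachable ⟨(x, y), hmem x hx⟩ ⟨(0, y), hmem 0 h0⟩ := by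
    intro x
    induction x with
    | zero => intro _; exact SimpleGraph.Reachable.refl _
    | succ n ih =>
      intro hx
      have hn : n < 3 ^ k := by omega
      have hadj : (SierpGraph.induce (HlineSet k y)).Adj ⟨(n+1, y), hmem _ hx⟩ ⟨(n, y), hmem n hn⟩ := by
        simpa using (adj_horiz (sierpMem_right hyd n) (sierpMem_right hyd (n+1))).symm
      exact (hadj.reachable).trans (ih hn)
  haveI : Nonempty (HlineSet k y) := ⟨⟨(0, y), hmem 0 h0⟩⟩
  constructor
  intro u v
  · have hu : u.1 = (u.1.1, y) := Prod.ext rfl u.2.2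
    have hv : v.1 = (v.1.1, y) := Prod.ext rfl v.2.2
    have hu2 : u.1.1 < 3 ^ k := (mem_GammaV.mp u.2.1).1
    have hv2 : v.1.1 < 3 ^ k := (mem_GammaV.mp v.2.1).1
    have hueq : u = ⟨(u.1.1, y), hmem _ hu2⟩ := Subtype.ext hu
    have hveq : v = ⟨(v.1.1, y), hmem _ hv2⟩ := Subtype.ext hv
    rw [hueq, hveq]
    exact (key _ hu2).trans (key _ hv2).symm

lemma mem_of_completeV {k x : ℕ} (h : CompleteV k x) : x ∈ Dset k := by
  obtain ⟨p, hp⟩ := h.nonempty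
  have hxlt : x < 3 ^ k := by
    have := (mem_GammaV.mp hp.1).1
    rwa [hp.2] at this
  rw [mem_Dset]
  refine ⟨hxlt, fun i hi => ?_⟩
  have hik : i < k := by
    by_contra hik
    rw [digit_eq_zero (lt_of_lt_of_le hxlt (Nat.pow_le_pow_right (by norm_num) (by omega)))] at hi
    exact absurd hi (by norm_num)
  have hilt : 2 * 3 ^ i < 3 ^ k := by
    have h3 : 2 * 3 ^ i < 3 ^ (i + 1) := by
      have := pow_pos (by norm_num : (0:ℕ) < 3) i
      rw [pow_succ']; omega
    exact lt_of_lt_of_le h3 (Nat.pow_le_pow_right (by norm_num) (by omega))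
  have hd2 : ∀ j, digit 3 j (2 * 3 ^ i) ≠ 1 := by
    intro j
    rcases eq_or_ne j i with rfl | hji
    · rw [digit_two_pow_self]; norm_num
    · exact digit_two_pow_ne i j hji
  have hd0 : ∀ j, digit 3 j 0 ≠ 1 := by
    intro j
    rw [digit_eq_zero (pow_pos (by norm_num : (0:ℕ) < 3) j)]; norm_num
  have hm0 : (x, 0) ∈ VlineSet k x :=
    ⟨mem_GammaV.mpr ⟨hxlt, pow_pos (by norm_num : (0:ℕ) < 3) k, sierpMem_right hd0 x⟩, rfl⟩
  have hm2 : (x, 2 * 3 ^ i) ∈ VlineSet k x :=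
    ⟨mem_GammaV.mpr ⟨hxlt, hilt, sierpMem_right hd2 x⟩, rfl⟩
  -- invariant: second coordinate stays below 3 ^ i
  have inv : ∀ (u v : VlineSet k x),
      (SierpGraph.induce (VlineSet k x)).Adj u v → u.1.2 < 3 ^ i → v.1.2 < 3 ^ i := by
    rintro ⟨⟨a, b⟩, hu⟩ ⟨⟨c, d⟩, hv⟩ hadj hub
    obtain ⟨-, -, habs⟩ := hadj
    simp only [Function.Embedding.coe_subtype] at habs
    simp only at habs hub ⊢
    have ha : a = x := hu.2
    have hc : c = x := hv.2
    rw [ha, hc] at habs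
    have hx0 : |(x:ℤ) - x| = 0 := by simp
    rw [hx0, zero_add] at habs
    have hbd : (b:ℤ) - d = 1 ∨ (b:ℤ) - d = -1 := abs_eq (by norm_num) |>.mp habs
    have hdne : d ≠ 3 ^ i := by
      rintro rfl
      exact (mem_GammaV.mp hv.1).2.2 i ⟨by simpa [hc] using hi, digit_pow i⟩
    omega
  have walk_inv : ∀ (u v : VlineSet k x) (w : (SierpGraph.induce (VlineSet k x)).Walk u v),
      u.1.2 < 3 ^ i → v.1.2 < 3 ^ i := by
    intro u v w
    induction w with
    | nil => exact id
    | cons hadj p ih => intro hu; exact ih (inv _ _ hadj hu)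
  obtain ⟨w⟩ := h.preconnected ⟨(x, 0), hm0⟩ ⟨(x, 2 * 3 ^ i), hm2⟩
  have := walk_inv _ _ w (pow_pos (by norm_num : (0:ℕ) < 3) i)
  simp only at this
  have := pow_pos (by norm_num : (0:ℕ) < 3) i
  omega

lemma mem_of_completeH {k y : ℕ} (h : CompleteH k y) : y ∈ Dset k := by
  obtain ⟨p, hp⟩ := h.nonempty
  have hylt : y < 3 ^ k := by
    have := (mem_GammaV.mp hp.1).2.1
    rwa [hp.2] at this
  rw [mem_Dset]
  refine ⟨hylt, fun i hi => ?_⟩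
  have hik : i < k := by
    by_contra hik
    rw [digit_eq_zero (lt_of_lt_of_le hylt (Nat.pow_le_pow_right (by norm_num) (by omega)))] at hi
    exact absurd hi (by norm_num)
  have hilt : 2 * 3 ^ i < 3 ^ k := by
    have h3 : 2 * 3 ^ i < 3 ^ (i + 1) := by
      have := pow_pos (by norm_num : (0:ℕ) < 3) i
      rw [pow_succ']; omega
    exact lt_of_lt_of_le h3 (Nat.pow_le_pow_right (by norm_num) (by omega))
  have hd2 : ∀ j, digit 3 j (2 * 3 ^ i) ≠ 1 := by
    intro j
    rcases eq_or_ne j i with rfl | hji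
    · rw [digit_two_pow_self]; norm_num
    · exact digit_two_pow_ne i j hji
  have hd0 : ∀ j, digit 3 j 0 ≠ 1 := by
    intro j
    rw [digit_eq_zero (pow_pos (by norm_num : (0:ℕ) < 3) j)]; norm_num
  have hm0 : (0, y) ∈ HlineSet k y :=
    ⟨mem_GammaV.mpr ⟨pow_pos (by norm_num : (0:ℕ) < 3) k, hylt, sierpMem_left hd0 y⟩, rfl⟩
  have hm2 : (2 * 3 ^ i, y) ∈ HlineSet k y :=
    ⟨mem_GammaV.mpr ⟨hilt, hylt, sierpMem_left hd2 y⟩, rfl⟩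
  have inv : ∀ (u v : HlineSet k y),
      (SierpGraph.induce (HlineSet k y)).Adj u v → u.1.1 < 3 ^ i → v.1.1 < 3 ^ i := by
    rintro ⟨⟨a, b⟩, hu⟩ ⟨⟨c, d⟩, hv⟩ hadj hub
    obtain ⟨-, -, habs⟩ := hadj
    simp only [Function.Embedding.coe_subtype] at habs
    simp only at habs hub ⊢
    have hb : b = y := hu.2
    have hd : d = y := hv.2
    rw [hb, hd] at habs
    have hy0 : |(y:ℤ) - y| = 0 := by simp
    rw [hy0, add_zero] at habs
    have hac : (a:ℤ) - c = 1 ∨ (a:ℤ) - c = -1 := abs_eq (by norm_num) |>.mp habs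
    have hcne : c ≠ 3 ^ i := by
      rintro rfl
      exact (mem_GammaV.mp hv.1).2.2 i ⟨digit_pow i, by simpa [hd] using hi⟩
    omega
  have walk_inv : ∀ (u v : HlineSet k y) (w : (SierpGraph.induce (HlineSet k y)).Walk u v),
      u.1.1 < 3 ^ i → v.1.1 < 3 ^ i := by
    intro u v w
    induction w with
    | nil => exact id
    | cons hadj p ih => intro hu; exact ih (inv _ _ hadj hu)
  obtain ⟨w⟩ := h.preconnected ⟨(0, y), hm0⟩ ⟨(2 * 3 ^ i, y), hm2⟩
  have := walk_inv _ _ w (pow_pos (by norm_num : (0:ℕ) < 3) i)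
  simp only at this
  have := pow_pos (by norm_num : (0:ℕ) < 3) i
  omega

lemma CkV_eq (k : ℕ) :
    CkV k = (Dset k ×ˢ Finset.range (3 ^ k)) ∪ (Finset.range (3 ^ k) ×ˢ Dset k) := by
  ext ⟨x, y⟩
  simp only [CkV, Finset.mem_filter, Finset.mem_union, Finset.mem_product, Finset.mem_range]
  constructor
  · rintro ⟨hg, hc | hc⟩
    · exact Or.inl ⟨mem_of_completeV hc, (mem_GammaV.mp hg).2.1⟩
    · exact Or.inr ⟨(mem_GammaV.mp hg).1, mem_of_completeH hc⟩
  · rintro (⟨hx, hy⟩ | ⟨hx, hy⟩)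
    · exact ⟨mem_GammaV.mpr ⟨(mem_Dset.mp hx).1, hy, sierpMem_left (mem_Dset.mp hx).2 y⟩,
        Or.inl (completeV_of_mem hx)⟩
    · exact ⟨mem_GammaV.mpr ⟨hx, (mem_Dset.mp hy).1, sierpMem_right (mem_Dset.mp hy).2 x⟩,
        Or.inr (completeH_of_mem hy)⟩

lemma card_CkV (k : ℕ) : (CkV k).card + 2 ^ k * 2 ^ k = 2 * (2 ^ k * 3 ^ k) := by
  rw [CkV_eq]
  have hinter : (Dset k ×ˢ Finset.range (3 ^ k)) ∩ (Finset.range (3 ^ k) ×ˢ Dset k)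
      = Dset k ×ˢ Dset k := by
    ext ⟨x, y⟩
    simp only [Finset.mem_inter, Finset.mem_product, Finset.mem_range]
    constructor
    · rintro ⟨⟨h1, -⟩, ⟨-, h2⟩⟩; exact ⟨h1, h2⟩
    · rintro ⟨h1, h2⟩
      exact ⟨⟨h1, (mem_Dset.mp h2).1⟩, ⟨(mem_Dset.mp h1).1, h2⟩⟩
  have h := Finset.card_union_add_card_inter (Dset k ×ˢ Finset.range (3 ^ k))
    (Finset.range (3 ^ k) ×ˢ Dset k)
  rw [hinter] at h
  simp only [Finset.card_product, Finset.card_range, card_Dset] at h ⊢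
  rw [h]; ring

namespace SimpleGraph

lemma reachIn_refl {V : Type*} (X : SimpleGraph V) {s : Set V} {v : V} (hv : v ∈ s) :
    X.ReachIn s v v := ⟨hv, hv, SimpleGraph.Reachable.refl _⟩

lemma ReachIn.symm' {V : Type*} {X : SimpleGraph V} {s : Set V} {v w : V}
    (h : X.ReachIn s v w) : X.ReachIn s w v := by
  obtain ⟨hv, hw, r⟩ := h
  exact ⟨hw, hv, r.symm⟩

lemma ReachIn.trans' {V : Type*} {X : SimpleGraph V} {s : Set V} {u v w : V}
    (h1 : X.ReachIn s u v) (h2 : X.ReachIn s v w) : X.ReachIn s u w := by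
  obtain ⟨hu, hv, r1⟩ := h1
  obtain ⟨hv', hw, r2⟩ := h2
  exact ⟨hu, hw, r1.trans r2⟩

lemma reachIn_adj {V : Type*} (X : SimpleGraph V) {s : Set V} {v w : V}
    (hv : v ∈ s) (hw : w ∈ s) (h : X.Adj v w) : X.ReachIn s v w :=
  ⟨hv, hw, SimpleGraph.Adj.reachable (by simpa using h)⟩

end SimpleGraph

lemma vert_reach {k : ℕ} {s : Set (ℕ × ℕ)} {x : ℕ} (hx : ∀ i, digit 3 i x ≠ 1)
    (hline : ∀ y, y < 3 ^ k → (x, y) ∈ s) :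
    ∀ a b, a < 3 ^ k → b < 3 ^ k → SierpGraph.ReachIn s (x, a) (x, b) := by
  have key : ∀ a, a < 3 ^ k → SierpGraph.ReachIn s (x, a) (x, 0) := by
    intro a
    induction a with
    | zero => intro h; exact SierpGraph.reachIn_refl (hline 0 h)
    | succ n ih =>
      intro h
      have hn : n < 3 ^ k := by omega
      exact (SierpGraph.reachIn_adj (hline _ h) (hline _ hn)
        (adj_vert (sierpMem_left hx n) (sierpMem_left hx (n+1))).symm).trans' (ih hn)
  intro a b ha hb
  exact (key a ha).trans' (key b hb).symm'

lemma horiz_reach {k : ℕ} {s : Set (ℕ × ℕ)} {y : ℕ} (hy : ∀ i, digit 3 i y ≠ 1)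
    (hline : ∀ x, x < 3 ^ k → (x, y) ∈ s) :
    ∀ a b, a < 3 ^ k → b < 3 ^ k → SierpGraph.ReachIn s (a, y) (b, y) := by
  have key : ∀ a, a < 3 ^ k → SierpGraph.ReachIn s (a, y) (0, y) := by
    intro a
    induction a with
    | zero => intro h; exact SierpGraph.reachIn_refl (hline 0 h)
    | succ n ih =>
      intro h
      have hn : n < 3 ^ k := by omega
      exact (SierpGraph.reachIn_adj (hline _ h) (hline _ hn)
        (adj_horiz (sierpMem_right hy n) (sierpMem_right hy (n+1))).symm).trans' (ih hn)
  intro a b ha hb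
  exact (key a ha).trans' (key b hb).symm'

lemma main_lemma (k : ℕ) (hk : 1 ≤ k) (T : Finset (ℕ × ℕ)) (hT : T ⊆ CkV k)
    (hcard : T.card < 2 ^ (k - 1)) :
    ∃ v ∈ CkV k \ T,
      (CkV k).card < 2 * (SierpGraph.compIn (↑(CkV k \ T)) v).ncard := by
  have hm2t : 2 * T.card + 2 ≤ 2 ^ k := by
    have : 2 * 2 ^ (k - 1) = 2 ^ k := by
      rw [← pow_succ']
      congr 1
      omega
    omega
  set UV := Dset k \ T.image Prod.fst with hUVdef
  set UH := Dset k \ T.image Prod.snd with hUHdef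
  have hUVcard : 2 ^ k ≤ UV.card + T.card := by
    have h1 := Finset.le_card_sdiff (T.image Prod.fst) (Dset k)
    rw [← hUVdef] at h1
    have h2 := Finset.card_image_le (s := T) (f := Prod.fst)
    have h3 := card_Dset k
    omega
  have hUHcard : 2 ^ k ≤ UH.card + T.card := by
    have h1 := Finset.le_card_sdiff (T.image Prod.snd) (Dset k)
    rw [← hUHdef] at h1
    have h2 := Finset.card_image_le (s := T) (f := Prod.snd)
    have h3 := card_Dset k
    omega
  have hUVle : UV.card ≤ 2 ^ k := by
    have := Finset.card_le_card (Finset.sdiff_subset (s := Dset k) (t := T.image Prod.fst))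
    rw [card_Dset] at this
    exact this
  have hUHle : UH.card ≤ 2 ^ k := by
    have := Finset.card_le_card (Finset.sdiff_subset (s := Dset k) (t := T.image Prod.snd))
    rw [card_Dset] at this
    exact this
  have hmP : (2:ℕ) ^ k ≤ 3 ^ k := Nat.pow_le_pow_left (by norm_num) k
  -- membership lemmas
  have hmemV : ∀ x ∈ UV, ∀ y, y < 3 ^ k → (x, y) ∈ CkV k \ T := by
    intro x hx y hy
    rw [Finset.mem_sdiff] at hx ⊢
    refine ⟨?_, ?_⟩
    · rw [CkV_eq]
      exact Finset.mem_union_left _ (Finset.mem_product.mpr ⟨hx.1, Finset.mem_range.mpr hy⟩)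
    · intro hmem
      exact hx.2 (Finset.mem_image.mpr ⟨(x, y), hmem, rfl⟩)
  have hmemH : ∀ y ∈ UH, ∀ x, x < 3 ^ k → (x, y) ∈ CkV k \ T := by
    intro y hy x hx
    rw [Finset.mem_sdiff] at hy ⊢
    refine ⟨?_, ?_⟩
    · rw [CkV_eq]
      exact Finset.mem_union_right _ (Finset.mem_product.mpr ⟨Finset.mem_range.mpr hx, hy.1⟩)
    · intro hmem
      exact hy.2 (Finset.mem_image.mpr ⟨(x, y), hmem, rfl⟩)
  -- pick base point
  have hUVne : UV.Nonempty := Finset.card_pos.mp (by omega)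
  have hUHne : UH.Nonempty := Finset.card_pos.mp (by omega)
  obtain ⟨x0, hx0⟩ := hUVne
  obtain ⟨y0, hy0⟩ := hUHne
  have hx0D : x0 ∈ Dset k := (Finset.mem_sdiff.mp hx0).1
  have hy0D : y0 ∈ Dset k := (Finset.mem_sdiff.mp hy0).1
  have hx0P : x0 < 3 ^ k := (mem_Dset.mp hx0D).1
  have hy0P : y0 < 3 ^ k := (mem_Dset.mp hy0D).1
  set s : Set (ℕ × ℕ) := ↑(CkV k \ T) with hsdef
  -- reachability from (x0, y0) to every point of the untouched lines
  have reachV : ∀ x ∈ UV, ∀ y, y < 3 ^ k → SierpGraph.ReachIn s (x0, y0) (x, y) := by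
    intro x hx y hy
    have hxD := (Finset.mem_sdiff.mp hx).1
    have hxP := (mem_Dset.mp hxD).1
    have r1 : SierpGraph.ReachIn s (x, y) (x, y0) :=
      vert_reach (mem_Dset.mp hxD).2 (fun y' hy' => hmemV x hx y' hy') y y0 hy hy0P
    have r2 : SierpGraph.ReachIn s (x, y0) (x0, y0) :=
      horiz_reach (mem_Dset.mp hy0D).2 (fun x' hx' => hmemH y0 hy0 x' hx') x x0 hxP hx0P
    exact (r1.trans' r2).symm'
  have reachH : ∀ y ∈ UH, ∀ x, x < 3 ^ k → SierpGraph.ReachIn s (x0, y0) (x, y) := by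
    intro y hy x hx
    have hyD := (Finset.mem_sdiff.mp hy).1
    have hyP := (mem_Dset.mp hyD).1
    have r1 : SierpGraph.ReachIn s (x, y) (x0, y) :=
      horiz_reach (mem_Dset.mp hyD).2 (fun x' hx' => hmemH y hy x' hx') x x0 hx hx0P
    have r2 : SierpGraph.ReachIn s (x0, y) (x0, y0) :=
      vert_reach (mem_Dset.mp hx0D).2 (fun y' hy' => hmemV x0 hx0 y' hy') y y0 hyP hy0P
    exact (r1.trans' r2).symm'
  -- the big connected set
  set A : Finset (ℕ × ℕ) :=
    (UV ×ˢ Finset.range (3 ^ k)) ∪ (Finset.range (3 ^ k) ×ˢ UH) with hAdef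
  have hAsub : (↑A : Set (ℕ × ℕ)) ⊆ SierpGraph.compIn s (x0, y0) := by
    intro ⟨x, y⟩ hp
    simp only [hAdef, Finset.coe_union, Set.mem_union, Finset.coe_product,
      Set.mem_prod, Finset.mem_coe, Finset.coe_range, Set.mem_Iio] at hp
    rcases hp with ⟨hx, hy⟩ | ⟨hx, hy⟩
    · exact reachV x hx y hy
    · exact reachH y hy x hx
  have hfin : (SierpGraph.compIn s (x0, y0)).Finite := by
    apply Set.Finite.subset (CkV k \ T).finite_toSet
    rintro w ⟨-, hw, -⟩
    exact hw
  have hncard : A.card ≤ (SierpGraph.compIn s (x0, y0)).ncard := by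
    have := Set.ncard_le_ncard hAsub hfin
    rwa [Set.ncard_coe_finset] at this
  -- cardinality of A
  have hAint : (UV ×ˢ Finset.range (3 ^ k)) ∩ (Finset.range (3 ^ k) ×ˢ UH) = UV ×ˢ UH := by
    ext ⟨x, y⟩
    simp only [Finset.mem_inter, Finset.mem_product, Finset.mem_range]
    constructor
    · rintro ⟨⟨h1, -⟩, -, h2⟩
      exact ⟨h1, h2⟩
    · rintro ⟨h1, h2⟩
      refine ⟨⟨h1, (mem_Dset.mp (Finset.mem_sdiff.mp h2).1).1⟩,
        (mem_Dset.mp (Finset.mem_sdiff.mp h1).1).1, h2⟩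
  have hA : A.card + UV.card * UH.card = UV.card * 3 ^ k + 3 ^ k * UH.card := by
    have h := Finset.card_union_add_card_inter (UV ×ˢ Finset.range (3 ^ k))
      (Finset.range (3 ^ k) ×ˢ UH)
    rw [hAint] at h
    simpa [Finset.card_product] using h
  -- conclude
  refine ⟨(x0, y0), hmemV x0 hx0 y0 hy0P, ?_⟩
  have hC := card_CkV k
  have key : (CkV k).card < 2 * A.card := by
    zify at hC hA hUVcard hUHcard hUVle hUHle hmP hm2t ⊢
    nlinarith [mul_nonneg (by linarith : (0:ℤ) ≤ (3:ℤ) ^ k - 2 ^ k)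
        (by linarith : (0:ℤ) ≤ (UV.card : ℤ) + UH.card - 2 ^ k),
      mul_le_mul (by linarith : ((2:ℤ) ^ k - UV.card) ≤ T.card)
        (by linarith : ((2:ℤ) ^ k - UH.card) ≤ T.card)
        (by linarith) (by linarith : (0:ℤ) ≤ (T.card : ℤ)),
      mul_le_mul (by linarith : ((2:ℤ) * T.card + 2) ≤ 2 ^ k)
        (by linarith : ((2:ℤ) * T.card + 2) ≤ 2 ^ k)
        (by positivity) (by positivity)]
  omega

lemma isHalfCutSet_self {V : Type*} (X : SimpleGraph V) (G : Finset V) :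
    IsHalfCutSet X G G := by
  refine ⟨subset_rfl, fun v => ?_⟩
  rw [Finset.sdiff_self]
  have h2 : X.compIn (↑(∅ : Finset V)) v = ∅ := by
    ext w
    simp only [SimpleGraph.compIn, SimpleGraph.ReachIn, Set.mem_setOf_eq,
      Finset.coe_empty, Set.mem_empty_iff_false, false_and, exists_false]
    tauto
  rw [h2]
  simp

theorem sierpinski_complete_lines_cut (k : ℕ) (hk : 1 ≤ k) :
    2 ^ (k - 1) ≤ cutHalf SierpGraph (CkV k) ∧
    ∀ T : Finset (ℕ × ℕ), T ⊆ CkV k → T.card < 2 ^ (k - 1) →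
      ∃ v ∈ CkV k \ T,
        (CkV k).card < 2 * (SierpGraph.compIn (↑(CkV k \ T)) v).ncard := by
  refine ⟨?_, fun T hT hc => main_lemma k hk T hT hc⟩
  by_contra h
  push_neg at h
  have hne : {t | ∃ T : Finset (ℕ × ℕ),
      IsHalfCutSet SierpGraph (CkV k) T ∧ T.card = t}.Nonempty := by
    exact ⟨(CkV k).card, CkV k, isHalfCutSet_self _ _, rfl⟩
  have hmem := Nat.sInf_mem hne
  obtain ⟨T, hTc, hTcard⟩ := hmem
  rw [cutHalf] at h
  obtain ⟨v, hv, hlt⟩ := main_lemma k hk T hTc.1 (by rw [hTcard]; exact h)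
  have h2 : 2 * (SierpGraph.compIn (↑(CkV k \ T)) v).ncard ≤ (CkV k).card := by
    have h3 := hTc.2 v
    convert h3 using 6
    congr!
  omega
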